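/- For a twisted superpotential ω with twist τ chosen so that the arrow basis is closed under τ, the coefficients c_p in e(ω⊗1)e = Σ_{|p|=n} c_p p satisfy the twisted cyclic symmetry c_{p₁⋯pₙ} = (-1)^{n-1} c_{pₙ^τ p₁p₂⋯p_{n-1}} for every length-n path p = p₁⋯pₙ. -/

import Mathlib

/- STATEMENT 10: For a twisted superpotential ω of degree n with twist τ (the
arrow basis being closed under τ), the coefficients c_p in ω = Σ_{|p|=n} c_p p
satisfy the twisted cyclic symmetry
  c_{p₁⋯pₙ} = (-1)^(n-1) c_{pₙ^τ p₁p₂⋯p_{n-1}}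
for every length-n path p = p₁⋯pₙ. -/

open scoped Classical

noncomputable section

variable {V : Type} [Quiver.{1} V]

abbrev PathsOf (V : Type) [Quiver.{1} V] := Σ a b : V, Quiver.Path a b
abbrev ArrowOf (V : Type) [Quiver.{1} V] := Σ a b : V, a ⟶ b
abbrev PathAlg (V : Type) [Quiver.{1} V] := PathsOf V →₀ ℂ

def pathBasis (p : PathsOf V) : PathAlg V := Finsupp.single p 1

/-- A graded automorphism τ of the path algebra permuting vertices and
arrows. -/
structure QuivAut (V : Type) [Quiver.{1} V] where
  onV : V ≃ V
  onA : ∀ {a b : V}, (a ⟶ b) ≃ (onV a ⟶ onV b)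

def QuivAut.mapArrow (τ : QuivAut V) (e : ArrowOf V) : ArrowOf V :=
  ⟨τ.onV e.1, τ.onV e.2.1, τ.onA e.2.2⟩

def popFirst {a : V} : ∀ {b : V}, Quiver.Path a b →
    Option (Σ c : V, (a ⟶ c) × Quiver.Path c b)
  | _, .nil => none
  | _, .cons .nil f => some ⟨_, f, .nil⟩
  | _, .cons (.cons p g) f =>
      match popFirst (.cons p g) with
      | none => none
      | some ⟨c, a0, rest⟩ => some ⟨c, a0, rest.cons f⟩

/-- Left derivative `[a* q]` of a basis path by an arrow. -/
def lderBasis (e : ArrowOf V) : PathsOf V → PathAlg V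
  | ⟨a, b, q⟩ =>
    match q with
    | Quiver.Path.nil => 0
    | @Quiver.Path.cons _ _ _ c _ p f =>
        if (⟨c, b, f⟩ : ArrowOf V) = e then pathBasis ⟨a, c, p⟩ else 0

/-- Right derivative `[q a*]` of a basis path by an arrow. -/
def rderBasis (e : ArrowOf V) : PathsOf V → PathAlg V
  | ⟨a, b, q⟩ =>
    match popFirst q with
    | some ⟨c, a0, rest⟩ =>
        if (⟨a, c, a0⟩ : ArrowOf V) = e then pathBasis ⟨c, b, rest⟩ else 0
    | none => 0

def lder (e : ArrowOf V) : PathAlg V →ₗ[ℂ] PathAlg V :=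
  Finsupp.lsum ℂ fun q => LinearMap.toSpanSingleton ℂ _ (lderBasis e q)

def rder (e : ArrowOf V) : PathAlg V →ₗ[ℂ] PathAlg V :=
  Finsupp.lsum ℂ fun q => LinearMap.toSpanSingleton ℂ _ (rderBasis e q)

/-- The twisted cyclic shift: `p₁⋯pₙ ↦ pₙ^τ p₁⋯p_{n-1}` on a basis path
(and `0` if the result is not composable). -/
def twistShiftBasis (τ : QuivAut V) : PathsOf V → PathAlg V
  | ⟨a, b, q⟩ =>
    match popFirst q with
    | none => 0
    | some ⟨c, a0, rest⟩ =>
        if h : b = τ.onV a then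
          pathBasis ⟨c, τ.onV c, (h ▸ rest).comp (τ.onA a0).toPath⟩
        else 0

lemma popFirst_comp {a c : V} (f : a ⟶ c) :
    ∀ {b : V} (rest : Quiver.Path c b),
      popFirst (f.toPath.comp rest) = some ⟨c, f, rest⟩
  | _, .nil => rfl
  | _, .cons r g => by
    cases r with
    | nil => rfl
    | cons r' g' =>
      show popFirst (((f.toPath.comp (r'.cons g')).cons g)) = _
      have IH := popFirst_comp f (r'.cons g')
      simp only [Quiver.Path.comp_cons] at IH ⊢
      rw [popFirst, IH]

lemma eq_of_popFirst {a : V} :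
    ∀ {b : V} (q : Quiver.Path a b) {c : V} (f : a ⟶ c) (rest : Quiver.Path c b),
      popFirst q = some ⟨c, f, rest⟩ → q = f.toPath.comp rest := by
  intro b q
  induction q with
  | nil => intro c f rest h; simp [popFirst] at h
  | cons p g ih =>
    intro c f rest h
    cases p with
    | nil =>
      simp only [popFirst] at h
      obtain ⟨rfl, h2⟩ := Sigma.mk.inj_iff.mp (Option.some.inj h)
      obtain ⟨h3, h4⟩ := Prod.mk_inj.mp (eq_of_heq h2)
      subst h3; subst h4
      rfl
    | cons p' g' =>
      rw [popFirst] at h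
      rcases hp : popFirst (p'.cons g') with _ | ⟨c₀, a₀, r₀⟩ <;> rw [hp] at h
      · exact absurd h (by simp)
      · obtain ⟨rfl, h2⟩ := Sigma.mk.inj_iff.mp (Option.some.inj h)
        obtain ⟨h3, h4⟩ := Prod.mk_inj.mp (eq_of_heq h2)
        subst h3; subst h4
        rw [ih _ _ hp]
        rfl

lemma pathBasis_eq_of_apply_ne_zero {p q : PathsOf V} (h : pathBasis p q ≠ 0) : p = q := by
  by_contra hne
  exact h (by simp [pathBasis, Finsupp.single_apply, hne])

lemma lder_apply' (e : ArrowOf V) (ω : PathAlg V) (R : PathsOf V) :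
    lder e ω R = ω.sum fun p cp => cp * lderBasis e p R := by
  simp [lder, Finsupp.lsum_apply, LinearMap.toSpanSingleton_apply, Finsupp.sum_apply,
    Finsupp.smul_apply, smul_eq_mul]

lemma rder_apply' (e : ArrowOf V) (ω : PathAlg V) (R : PathsOf V) :
    rder e ω R = ω.sum fun p cp => cp * rderBasis e p R := by
  simp [rder, Finsupp.lsum_apply, LinearMap.toSpanSingleton_apply, Finsupp.sum_apply,
    Finsupp.smul_apply, smul_eq_mul]

lemma rder_eval {a c b : V} (a0 : a ⟶ c) (rest : Quiver.Path c b) (ω : PathAlg V) :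
    rder ⟨a, c, a0⟩ ω ⟨c, b, rest⟩ = ω ⟨a, b, a0.toPath.comp rest⟩ := by
  rw [rder_apply']
  rw [Finsupp.sum_eq_single (⟨a, b, a0.toPath.comp rest⟩ : PathsOf V)]
  · have h : rderBasis (⟨a, c, a0⟩ : ArrowOf V) ⟨a, b, a0.toPath.comp rest⟩ ⟨c, b, rest⟩ = 1 := by
      simp [rderBasis, popFirst_comp, pathBasis]
    rw [h, mul_one]
  · rintro ⟨x, y, r⟩ hmem hne
    rcases hr : popFirst r with _ | ⟨c₁, f₁, r₁⟩
    · simp [rderBasis, hr]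
    · simp only [rderBasis, hr]
      by_cases he : (⟨x, c₁, f₁⟩ : ArrowOf V) = ⟨a, c, a0⟩
      · obtain ⟨rfl, h2⟩ := Sigma.mk.inj_iff.mp he
        obtain ⟨rfl, h3⟩ := Sigma.mk.inj_iff.mp (eq_of_heq h2)
        obtain rfl := eq_of_heq h3
        rw [if_pos rfl]
        by_cases hR : (⟨c₁, y, r₁⟩ : PathsOf V) = ⟨c₁, b, rest⟩
        · exfalso
          obtain ⟨-, h4⟩ := Sigma.mk.inj_iff.mp hR
          obtain ⟨rfl, h5⟩ := Sigma.mk.inj_iff.mp (eq_of_heq h4)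
          obtain rfl := eq_of_heq h5
          exact hne (by rw [eq_of_popFirst r f₁ r₁ hr])
        · simp [pathBasis, Finsupp.single_apply, hR]
      · rw [if_neg he]; simp
  · simp

lemma lder_eval {u v c : V} (g : u ⟶ v) (rest : Quiver.Path c u) (ω : PathAlg V) :
    lder ⟨u, v, g⟩ ω ⟨c, u, rest⟩ = ω ⟨c, v, rest.cons g⟩ := by
  rw [lder_apply']
  rw [Finsupp.sum_eq_single (⟨c, v, rest.cons g⟩ : PathsOf V)]
  · have h : lderBasis (⟨u, v, g⟩ : ArrowOf V) ⟨c, v, rest.cons g⟩ ⟨c, u, rest⟩ = 1 := by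
      simp [lderBasis, pathBasis]
    rw [h, mul_one]
  · rintro ⟨x, y, r⟩ hmem hne
    cases r with
    | nil => simp [lderBasis]
    | cons p f =>
      rename_i m
      simp only [lderBasis]
      by_cases he : (⟨m, y, f⟩ : ArrowOf V) = ⟨u, v, g⟩
      · obtain ⟨rfl, h2⟩ := Sigma.mk.inj_iff.mp he
        obtain ⟨rfl, h3⟩ := Sigma.mk.inj_iff.mp (eq_of_heq h2)
        obtain rfl := eq_of_heq h3
        rw [if_pos rfl]
        by_cases hR : (⟨x, m, p⟩ : PathsOf V) = ⟨c, m, rest⟩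
        · exfalso
          obtain ⟨rfl, h4⟩ := Sigma.mk.inj_iff.mp hR
          obtain ⟨-, h5⟩ := Sigma.mk.inj_iff.mp (eq_of_heq h4)
          obtain rfl := eq_of_heq h5
          exact hne rfl
        · simp [pathBasis, Finsupp.single_apply, hR]
      · rw [if_neg he]; simp
  · simp

lemma pathBasis_ne_zero (p : PathsOf V) : pathBasis p ≠ 0 := by
  simp [pathBasis]


/-- If ω is a twisted superpotential of degree n (a twisted
weak potential satisfying `[a^{τ*}ω] = (-1)^(n-1)[ωa*]` for all arrows `a`),
then its coefficients satisfy `c_{p₁⋯pₙ} = (-1)^(n-1) c_{pₙ^τ p₁⋯p_{n-1}}`. -/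
theorem twisted_superpotential_coefficients (τ : QuivAut V) (n : ℕ) (hn : 1 ≤ n)
    (ω : PathAlg V)
    (hdeg : ∀ P ∈ ω.support, (P.2.2 : Quiver.Path P.1 P.2.1).length = n)
    (htwisted : ∀ P ∈ ω.support, P.1 = τ.onV P.2.1)
    (hsup : ∀ e : ArrowOf V,
      lder (τ.mapArrow e) ω = ((-1 : ℂ)) ^ (n - 1) • rder e ω) :
    ∀ P Q : PathsOf V, (P.2.2 : Quiver.Path P.1 P.2.1).length = n →
      twistShiftBasis τ P = pathBasis Q →
      ω P = ((-1 : ℂ)) ^ (n - 1) * ω Q := by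
  rintro ⟨a, b, q⟩ Q hlen htwist
  rcases hp : popFirst q with _ | ⟨c, a0, rest⟩
  · exfalso
    simp only [twistShiftBasis, hp] at htwist
    exact pathBasis_ne_zero Q htwist.symm
  · simp only [twistShiftBasis, hp] at htwist
    by_cases hb : b = τ.onV a
    · subst hb
      rw [dif_pos rfl] at htwist
      have hQ : Q = ⟨c, τ.onV c, rest.cons (τ.onA a0)⟩ := by
        have h1 := Finsupp.single_left_injective (one_ne_zero (α := ℂ)) htwist
        rw [← h1]
        simp [Quiver.Hom.toPath]
      subst hQ
      have key := congrArg
        (fun f : PathAlg V => f (⟨c, τ.onV a, rest⟩ : PathsOf V)) (hsup ⟨a, c, a0⟩)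
      rw [Finsupp.smul_apply, smul_eq_mul] at key
      rw [show τ.mapArrow ⟨a, c, a0⟩ = (⟨τ.onV a, τ.onV c, τ.onA a0⟩ : ArrowOf V) from rfl]
        at key
      rw [lder_eval, rder_eval] at key
      have hq : q = a0.toPath.comp rest := eq_of_popFirst q a0 rest hp
      subst hq
      rw [key, ← mul_assoc]
      have hs : ((-1 : ℂ)) ^ (n - 1) * ((-1 : ℂ)) ^ (n - 1) = 1 := by
        rw [← pow_add]
        exact Even.neg_one_pow ⟨n - 1, rfl⟩
      rw [hs, one_mul]
    · rw [dif_neg hb] at htwist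
      exact absurd htwist.symm (pathBasis_ne_zero Q)

end
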